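/- Derivative formula underlying the Projection Theorem (Theorem 4.9): let γ = (X, P, Z) : I → ℝ^n × ℝ^n × ℝ be a C¹ curve on an interval I satisfying the Legendrian condition Z'(s) = P(s)ᵀX'(s) for all s ∈ I, and fix a point q₀ = (x₀, p₀, z₀) ∈ ℝ^{2n+1}. Then the function F(s) := D(γ(s), q₀) is differentiable with F'(s) = (P(s) − p₀)ᵀ X'(s) for all s ∈ I. Consequently s₀ is a critical point of F if and only if (P(s₀) − p₀) is orthogonal to the velocity X'(s₀) of the projected curve. -/

import Mathlib

open Matrix

/-- Derivative formula underlying the Projection Theorem (Theorem 4.9):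
for a C¹ Legendrian curve `γ = (X, P, Z)` (i.e. `Z'(s) = P(s)ᵀX'(s)`) on an interval,
and a fixed point `q₀ = (x₀, p₀, z₀)`, the function `F(s) = D(γ(s), q₀)` is
differentiable with `F'(s) = (P(s) − p₀)ᵀ X'(s)`; consequently `s₀` is a critical point
of `F` iff `P(s₀) − p₀` is orthogonal to the velocity `X'(s₀)` of the projected curve. -/
theorem projection_theorem_derivative_formula (n : ℕ) (a b : ℝ)
    (D : ((Fin n → ℝ) × (Fin n → ℝ) × ℝ) → ((Fin n → ℝ) × (Fin n → ℝ) × ℝ) → ℝ)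
    (hD : ∀ P Q, D P Q = P.2.2 + (Q.2.1 ⬝ᵥ Q.1 - Q.2.2) - P.1 ⬝ᵥ Q.2.1)
    (X P : ℝ → (Fin n → ℝ)) (Z : ℝ → ℝ)
    (X' : ℝ → (Fin n → ℝ)) (Z' : ℝ → ℝ)
    (hX : ∀ s ∈ Set.Ioo a b, HasDerivAt X (X' s) s)
    (hZ : ∀ s ∈ Set.Ioo a b, HasDerivAt Z (Z' s) s)
    (hLeg : ∀ s ∈ Set.Ioo a b, Z' s = P s ⬝ᵥ X' s)
    (x₀ p₀ : Fin n → ℝ) (z₀ : ℝ)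
    (F : ℝ → ℝ) (hF : ∀ s, F s = D (X s, P s, Z s) (x₀, p₀, z₀)) :
    ∀ s ∈ Set.Ioo a b,
      HasDerivAt F ((P s - p₀) ⬝ᵥ X' s) s ∧
      (deriv F s = 0 ↔ (P s - p₀) ⬝ᵥ X' s = 0) := by
  intro s hs
  have hXd : HasDerivAt (fun t => X t ⬝ᵥ p₀) (X' s ⬝ᵥ p₀) s := by
    simp only [dotProduct]
    apply HasDerivAt.fun_sum
    intro i _
    have hXi : HasDerivAt (fun t => X t i) (X' s i) s :=
      (ContinuousLinearMap.proj (R := ℝ) (φ := fun _ : Fin n => ℝ) i).hasFDerivAt.comp_hasDerivAt s (hX s hs)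
    exact hXi.mul_const _
  have hFd : HasDerivAt F ((P s - p₀) ⬝ᵥ X' s) s := by
    have hFe : F = fun t => Z t + (p₀ ⬝ᵥ x₀ - z₀) - X t ⬝ᵥ p₀ := by
      funext t; rw [hF t, hD]
    rw [hFe]
    have h := ((hZ s hs).add_const (p₀ ⬝ᵥ x₀ - z₀)).sub hXd
    have : Z' s - X' s ⬝ᵥ p₀ = (P s - p₀) ⬝ᵥ X' s := by
      rw [hLeg s hs, sub_dotProduct, dotProduct_comm (X' s) p₀]
    rwa [this] at h
  refine ⟨hFd, ?_⟩
  rw [hFd.deriv]
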